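/- (GSLR universality in the degenerate limit.) Fix integers H, W, B, R ≥ 1, an arbitrary latent tensor A : {0,…,H-1}×{0,…,W-1} → ℝ^R, and an arbitrary transform matrix T ∈ ℝ^{B×R}, and set X(x,y,z) = ∑_{r=0}^{R-1} A(x,y,r)·T(z,r). For σ > 0, let 𝒜_σ(x,y,r) = ∑_{(x',y')} A(x',y',r)·exp(-‖(x,y)-(x',y')‖²/(2σ²)) be the 2D Gaussian splatting with HW primitives centered at the grid points with features given by A and isotropic covariance σ²I, and let 𝒯_σ(z,r) = ∑_{k=0}^{B-1} T(k,r)·exp(-(z-k)²/(2σ²)) be the 1D Gaussian splatting with B primitives per column centered at 0,…,B-1 with features given by T. Then for every grid coordinate (x,y,z), the GSLR reconstruction ∑_{r=0}^{R-1} 𝒜_σ(x,y,r)·𝒯_σ(z,r) tends to X(x,y,z) as σ tends to 0 from the right. Hence every tensor of the form X = A ×₃ T is the pointwise limit of GSLR reconstructions. -/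

import Mathlib

open Filter

/-- The spatial grid point `(x, y) ∈ ℝ²` (with the Euclidean norm) associated to an index
in `{0,…,H-1} × {0,…,W-1}`. -/
noncomputable def gridPoint {H W : ℕ} (i : Fin H × Fin W) : EuclideanSpace ℝ (Fin 2) :=
  (WithLp.equiv 2 (Fin 2 → ℝ)).symm ![(i.1 : ℝ), (i.2 : ℝ)]

lemma exp_tendsto_aux (c : ℝ) :
    Tendsto (fun σ : ℝ => Real.exp (-c ^ 2 / (2 * σ ^ 2))) (nhdsWithin 0 (Set.Ioi 0))
      (nhds (if c = 0 then 1 else 0)) := by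
  rcases eq_or_ne c 0 with h | h
  · simp [h]
  · simp only [if_neg h]
    have h1 : Tendsto (fun σ : ℝ => σ⁻¹) (nhdsWithin 0 (Set.Ioi 0)) atTop :=
      tendsto_inv_nhdsGT_zero
    have h2 : Tendsto (fun σ : ℝ => σ⁻¹ * σ⁻¹) (nhdsWithin 0 (Set.Ioi 0)) atTop :=
      h1.atTop_mul_atTop₀ h1
    have hcsq : 0 < c ^ 2 := by positivity
    have hc : -c ^ 2 / 2 < 0 := by linarith
    have h3 := (h2.const_mul_atTop_of_neg hc)
    have h4 := Real.tendsto_exp_atBot.comp h3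
    refine h4.congr fun σ => ?_
    simp only [Function.comp]
    congr 1
    field_simp

lemma gridPoint_injective {H W : ℕ} : Function.Injective (gridPoint (H := H) (W := W)) := by
  intro i j h
  have h' : ![(i.1 : ℝ), (i.2 : ℝ)] = ![(j.1 : ℝ), (j.2 : ℝ)] :=
    (WithLp.equiv 2 (Fin 2 → ℝ)).symm.injective h
  have h0 := congrFun h' 0
  have h1 := congrFun h' 1
  simp only [Matrix.cons_val_zero, Matrix.cons_val_one, Matrix.head_cons] at h0 h1
  exact Prod.ext (by exact_mod_cast Fin.ext (by exact_mod_cast h0))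
    (by exact_mod_cast Fin.ext (by exact_mod_cast h1))


/-- GSLR universality in the degenerate limit: for any latent tensor `A` and transform
matrix `T`, with the 2D Gaussian splatting `𝒜_σ` (grid-centered primitives with features
`A` and isotropic covariance `σ²I`) and the 1D Gaussian splatting `𝒯_σ` (grid-centered
primitives with features `T`), the GSLR reconstruction `∑_r 𝒜_σ(x,y,r)·𝒯_σ(z,r)` tends to
`(A ×₃ T)(x,y,z) = ∑_r A(x,y,r)·T(z,r)` at every grid coordinate as `σ → 0⁺`. -/
theorem gslr_universality_degenerate_limit (H W B R : ℕ)
    (hH : 1 ≤ H) (hW : 1 ≤ W) (hB : 1 ≤ B) (hR : 1 ≤ R)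
    (A : Fin H → Fin W → Fin R → ℝ) (T : Matrix (Fin B) (Fin R) ℝ)
    (x : Fin H) (y : Fin W) (z : Fin B) :
    Tendsto
      (fun σ : ℝ =>
        ∑ r : Fin R,
          (∑ j : Fin H × Fin W,
            A j.1 j.2 r * Real.exp (-‖gridPoint (x, y) - gridPoint j‖ ^ 2 / (2 * σ ^ 2))) *
          (∑ k : Fin B,
            T k r * Real.exp (-((z : ℝ) - (k : ℝ)) ^ 2 / (2 * σ ^ 2))))
      (nhdsWithin 0 (Set.Ioi 0)) (nhds (∑ r : Fin R, A x y r * T z r)) := by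
  have hA : ∀ r : Fin R, Tendsto
      (fun σ : ℝ => ∑ j : Fin H × Fin W,
        A j.1 j.2 r * Real.exp (-‖gridPoint (x, y) - gridPoint j‖ ^ 2 / (2 * σ ^ 2)))
      (nhdsWithin 0 (Set.Ioi 0)) (nhds (A x y r)) := by
    intro r
    have h := tendsto_finset_sum (Finset.univ : Finset (Fin H × Fin W))
      (fun j _ => (exp_tendsto_aux ‖gridPoint (x, y) - gridPoint j‖).const_mul (A j.1 j.2 r))
    convert h using 2
    rw [eq_comm]
    have : ∀ j : Fin H × Fin W,
        (if ‖gridPoint (x, y) - gridPoint j‖ = 0 then (1:ℝ) else 0) =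
        (if j = (x, y) then (1:ℝ) else 0) := by
      intro j
      congr 1
      simp only [norm_sub_eq_zero_iff, eq_iff_iff]
      constructor
      · intro hg; exact (gridPoint_injective hg).symm
      · intro hj; rw [hj]
    simp only [this, mul_ite, mul_one, mul_zero, Finset.sum_ite_eq', Finset.mem_univ, if_true]
  have hT : ∀ r : Fin R, Tendsto
      (fun σ : ℝ => ∑ k : Fin B, T k r * Real.exp (-((z : ℝ) - (k : ℝ)) ^ 2 / (2 * σ ^ 2)))
      (nhdsWithin 0 (Set.Ioi 0)) (nhds (T z r)) := by
    intro r
    have h := tendsto_finset_sum (Finset.univ : Finset (Fin B))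
      (fun k _ => (exp_tendsto_aux ((z : ℝ) - (k : ℝ))).const_mul (T k r))
    convert h using 2
    rw [eq_comm]
    have : ∀ k : Fin B,
        (if ((z : ℝ) - (k : ℝ)) = 0 then (1:ℝ) else 0) = (if k = z then (1:ℝ) else 0) := by
      intro k
      congr 1
      simp only [sub_eq_zero, eq_iff_iff]
      constructor
      · intro hg; exact Fin.ext (by exact_mod_cast hg.symm)
      · intro hj; rw [hj]
    simp only [this, mul_ite, mul_one, mul_zero, Finset.sum_ite_eq', Finset.mem_univ, if_true]
  exact tendsto_finset_sum _ (fun r _ => (hA r).mul (hT r))
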